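/- Let f = a_0 + a_1 z + ... + a_m z^m be a polynomial with complex coefficients, let 0 < α < β be real numbers, and let j ∈ {0,...,m} satisfy |a_j| α^j > (β/α)^{m-j} Σ_{i≠j} |a_i| α^i. Then every complex zero θ of f satisfies |θ| < α or |θ| > β. -/

import Mathlib

theorem stmt_5 (m : ℕ) (a : ℕ → ℂ) (α β : ℝ) (hα : 0 < α) (hαβ : α < β)
    (j : ℕ) (hj : j ≤ m)
    (hineq : ‖a j‖ * α ^ j >
      (β / α) ^ (m - j) *
        ∑ i ∈ (Finset.range (m + 1)).erase j, ‖a i‖ * α ^ i)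
    (θ : ℂ) (hθ : ∑ i ∈ Finset.range (m + 1), a i * θ ^ i = 0) :
    ‖θ‖ < α ∨ β < ‖θ‖ := by
  by_contra hcon
  push_neg at hcon
  obtain ⟨h1, h2⟩ := hcon
  set r := ‖θ‖ with hr
  have hr0 : 0 < r := lt_of_lt_of_le hα h1
  set S := ∑ i ∈ (Finset.range (m + 1)).erase j, ‖a i‖ * α ^ i with hSdef
  have hS0 : 0 ≤ S := Finset.sum_nonneg fun i _ => by positivity
  have hjm : j ∈ Finset.range (m + 1) := Finset.mem_range.2 (Nat.lt_succ_of_le hj)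
  have hsum : a j * θ ^ j = -∑ i ∈ (Finset.range (m + 1)).erase j, a i * θ ^ i := by
    have h := Finset.add_sum_erase _ (fun i => a i * θ ^ i) hjm
    exact eq_neg_of_add_eq_zero_left (h.trans hθ)
  have hrα1 : 1 ≤ r / α := (one_le_div hα).2 h1
  have key1 : ‖a j‖ * r ^ j ≤
      ∑ i ∈ (Finset.range (m + 1)).erase j, ‖a i‖ * r ^ i := by
    calc ‖a j‖ * r ^ j = ‖a j * θ ^ j‖ := by
          rw [norm_mul, norm_pow]
      _ = ‖∑ i ∈ (Finset.range (m + 1)).erase j, a i * θ ^ i‖ := by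
          rw [hsum, norm_neg]
      _ ≤ ∑ i ∈ (Finset.range (m + 1)).erase j, ‖a i * θ ^ i‖ :=
          norm_sum_le _ _
      _ = ∑ i ∈ (Finset.range (m + 1)).erase j, ‖a i‖ * r ^ i := by
          simp [norm_mul, norm_pow, hr]
  have key2 : ∑ i ∈ (Finset.range (m + 1)).erase j, ‖a i‖ * r ^ i ≤
      (r / α) ^ m * S := by
    rw [hSdef, Finset.mul_sum]
    apply Finset.sum_le_sum
    intro i hi
    have him : i ≤ m := Nat.lt_succ_iff.1 (Finset.mem_range.1 (Finset.mem_of_mem_erase hi))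
    have : r ^ i = (r / α) ^ i * α ^ i := by
      rw [← mul_pow, div_mul_cancel₀ _ hα.ne']
    rw [this]
    have hpow : (r / α) ^ i ≤ (r / α) ^ m := pow_le_pow_right₀ hrα1 him
    calc ‖a i‖ * ((r / α) ^ i * α ^ i)
        = (r / α) ^ i * (‖a i‖ * α ^ i) := by ring
      _ ≤ (r / α) ^ m * (‖a i‖ * α ^ i) := by
          apply mul_le_mul_of_nonneg_right hpow (by positivity)
  have hrj : r ^ j = (r / α) ^ j * α ^ j := by
    rw [← mul_pow, div_mul_cancel₀ _ hα.ne']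
  have hsplit : (r / α) ^ m = (r / α) ^ j * (r / α) ^ (m - j) := by
    rw [← pow_add, Nat.add_sub_cancel' hj]
  have hrβ : (r / α) ^ (m - j) ≤ (β / α) ^ (m - j) := by
    apply pow_le_pow_left₀ (by positivity)
    gcongr
  have hpos : (0:ℝ) < (r / α) ^ j := by positivity
  have hmid : (r / α) ^ j * (‖a j‖ * α ^ j) ≤
      (r / α) ^ j * ((β / α) ^ (m - j) * S) := by
    calc (r / α) ^ j * (‖a j‖ * α ^ j)
        = ‖a j‖ * r ^ j := by rw [hrj]; ring
      _ ≤ (r / α) ^ m * S := key1.trans key2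
      _ = (r / α) ^ j * ((r / α) ^ (m - j) * S) := by rw [hsplit]; ring
      _ ≤ (r / α) ^ j * ((β / α) ^ (m - j) * S) := by
          apply mul_le_mul_of_nonneg_left _ hpos.le
          exact mul_le_mul_of_nonneg_right hrβ hS0
  have := (mul_le_mul_iff_of_pos_left hpos).1 hmid
  linarith
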